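/- If an n×n complex matrix H is diagonalizable with all eigenvalues real, then there exists a positive-definite Hermitian matrix V such that H† = V H V⁻¹. -/

import Mathlib

open ComplexOrder Matrix

lemma posDef_mul_conjTranspose_self_of_isUnit {n : ℕ} {P : Matrix (Fin n) (Fin n) ℂ}
    (hP : IsUnit P) : (P * Pᴴ).PosDef := by
  have hdet : IsUnit P.det := (Matrix.isUnit_iff_isUnit_det P).mp hP
  have hdetH : IsUnit Pᴴ.det := by rw [Matrix.det_conjTranspose]; exact hdet.star
  refine Matrix.PosDef.of_dotProduct_mulVec_pos (Matrix.isHermitian_mul_conjTranspose_self P) fun x hx => ?_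
  have key : star x ⬝ᵥ (P * Pᴴ) *ᵥ x = star (Pᴴ *ᵥ x) ⬝ᵥ (Pᴴ *ᵥ x) := by
    rw [Matrix.star_mulVec, Matrix.conjTranspose_conjTranspose, ← Matrix.mulVec_mulVec,
      Matrix.dotProduct_mulVec]
  rw [key]
  refine Matrix.dotProduct_star_self_pos_iff.mpr fun h => hx ?_
  have := congrArg (fun v => (Pᴴ)⁻¹ *ᵥ v) h
  simpa [Matrix.mulVec_mulVec, Matrix.nonsing_inv_mul Pᴴ hdetH] using this

theorem stmt_4 {n : ℕ} (H : Matrix (Fin n) (Fin n) ℂ)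
    (P : Matrix (Fin n) (Fin n) ℂ) (d : Fin n → ℝ) (hP : IsUnit P)
    (hdiag : H = P * Matrix.diagonal (fun i => (d i : ℂ)) * P⁻¹) :
    ∃ V : Matrix (Fin n) (Fin n) ℂ, V.IsHermitian ∧ V.PosDef ∧
      H.conjTranspose = V * H * V⁻¹ := by
  have hpd : (P * Pᴴ).PosDef := posDef_mul_conjTranspose_self_of_isUnit hP
  have hdet : IsUnit P.det := (Matrix.isUnit_iff_isUnit_det P).mp hP
  have hdetH : IsUnit Pᴴ.det := by rw [Matrix.det_conjTranspose]; exact hdet.star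
  refine ⟨(P * Pᴴ)⁻¹, hpd.inv.1, hpd.inv, ?_⟩
  have hVV : ((P * Pᴴ)⁻¹)⁻¹ = P * Pᴴ := by
    rw [Matrix.nonsing_inv_nonsing_inv]
    rw [Matrix.det_mul]
    exact hdet.mul hdetH
  rw [hVV, hdiag, Matrix.mul_inv_rev]
  have hD : (Matrix.diagonal (fun i => (d i : ℂ)))ᴴ = Matrix.diagonal (fun i => (d i : ℂ)) := by
    rw [Matrix.diagonal_conjTranspose]
    have : (star fun i => ((d i : ℂ))) = fun i => ((d i : ℂ)) := by
      funext i
      exact Complex.conj_ofReal (d i)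
    rw [this]
  rw [Matrix.conjTranspose_mul, Matrix.conjTranspose_mul, hD,
    Matrix.conjTranspose_nonsing_inv]
  have h1 : P⁻¹ * P = 1 := Matrix.nonsing_inv_mul P hdet
  simp only [Matrix.mul_assoc]
  rw [← Matrix.mul_assoc P⁻¹ P, h1, Matrix.one_mul, ← Matrix.mul_assoc P⁻¹ P, h1,
    Matrix.one_mul]
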